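/- Let E be a real normed vector space, let n ≥ 1 be a natural number, and let F : ℝ → E be of class C^{n+2} with F(0) = 0 and F(r) = O(r^{n+2}) as r → 0⁺. Then the unique tuple (u_1, …, u_n, p) ∈ E^{n+1} such that u(r) = Σ_{k=1}^{n} u_k r^k + p r^{n+1} log r satisfies n r u'(r) − r² u''(r) − F(r) = O(r^{n+2}) as r → 0⁺ is the zero tuple: u_1 = … = u_n = 0 and p = 0. -/

import Mathlib

open Filter Topology Asymptotics Finset

/-- The model indicial operator `L u (r) = n r u'(r) - r² u''(r)`. -/
noncomputable def modelOp {E : Type*} [NormedAddCommGroup E] [NormedSpace ℝ E]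
    (n : ℕ) (u : ℝ → E) : ℝ → E :=
  fun r => ((n : ℝ) * r) • deriv u r - (r ^ 2) • deriv (deriv u) r

/-- The model solution `u(r) = Σ_{k=1}^n u_k r^k + p r^{n+1} log r` built from a
tuple of coefficients `(u_1, …, u_n, p)`. -/
noncomputable def modelSol {E : Type*} [NormedAddCommGroup E] [NormedSpace ℝ E]
    (n : ℕ) (u : ℕ → E) (p : E) : ℝ → E :=
  fun r => (∑ k ∈ Icc 1 n, (r ^ k) • u k) + (r ^ (n + 1) * Real.log r) • p

section Aux

variable {E : Type*} [NormedAddCommGroup E] [NormedSpace ℝ E]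

lemma poly_c0 (M : ℕ) (c : ℕ → E)
    (h : (fun r : ℝ => ∑ k ∈ range (M+1), (r ^ k) • c k) =O[𝓝[>] (0:ℝ)] fun r => r ^ (M+1)) :
    c 0 = 0 := by
  have hcont : Continuous (fun r : ℝ => ∑ k ∈ range (M+1), (r ^ k) • c k) := by
    continuity
  have h1 : Tendsto (fun r : ℝ => ∑ k ∈ range (M+1), (r ^ k) • c k) (𝓝[>] (0:ℝ))
      (𝓝 (∑ k ∈ range (M+1), ((0:ℝ) ^ k) • c k)) :=
    (hcont.tendsto 0).mono_left nhdsWithin_le_nhds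
  have h0 : (∑ k ∈ range (M+1), ((0:ℝ) ^ k) • c k) = c 0 := by
    rw [Finset.sum_eq_single 0]
    · simp
    · intro b _ hb; simp [zero_pow hb]
    · simp
  rw [h0] at h1
  have h2 : Tendsto (fun r : ℝ => r ^ (M+1)) (𝓝[>] (0:ℝ)) (𝓝 0) := by
    have := (continuous_pow (M+1)).tendsto (0:ℝ)
    simpa using this.mono_left nhdsWithin_le_nhds
  have h3 := h.trans_tendsto h2
  exact tendsto_nhds_unique h1 h3

lemma poly_coeff_zero :
    ∀ (N : ℕ) (c : ℕ → E),
      ((fun r : ℝ => ∑ k ∈ range (N+1), (r ^ k) • c k) =O[𝓝[>] (0:ℝ)] fun r => r ^ (N+1)) →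
      ∀ k ≤ N, c k = 0 := by
  intro N
  induction N with
  | zero =>
    intro c h k hk
    interval_cases k
    exact poly_c0 0 c h
  | succ N ih =>
    intro c h
    have h0 : c 0 = 0 := poly_c0 (N+1) c h
    have heq : ∀ r : ℝ, (∑ k ∈ range (N+2), (r ^ k) • c k)
        = r • (∑ k ∈ range (N+1), (r ^ k) • c (k+1)) := by
      intro r
      rw [Finset.sum_range_succ' (fun k => (r ^ k) • c k) (N+1)]
      simp only [pow_zero, one_smul, h0, smul_zero, add_zero, Finset.smul_sum]
      refine Finset.sum_congr rfl fun k _ => ?_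
      rw [smul_smul, pow_succ, mul_comm]
    have h' : (fun r : ℝ => ∑ k ∈ range (N+1), (r ^ k) • c (k+1)) =O[𝓝[>] (0:ℝ)]
        fun r => r ^ (N+1) := by
      obtain ⟨C, hC⟩ := h.bound
      refine IsBigO.of_bound C ?_
      filter_upwards [hC, self_mem_nhdsWithin] with r hr (hrpos : 0 < r)
      rw [heq r, norm_smul, Real.norm_of_nonneg hrpos.le] at hr
      have : ‖r ^ (N+2)‖ = r * ‖r ^ (N+1)‖ := by
        rw [Real.norm_of_nonneg (by positivity), Real.norm_of_nonneg (by positivity)]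
        ring
      rw [this, ← mul_assoc, mul_comm C r, mul_assoc] at hr
      exact le_of_mul_le_mul_left hr hrpos
    have hrest := ih (fun k => c (k+1)) h'
    intro k hk
    match k with
    | 0 => exact h0
    | (j+1) => exact hrest j (Nat.succ_le_succ_iff.mp hk)

/-- First-derivative formula for the model solution. -/
noncomputable def modelD1 (n : ℕ) (v : ℕ → E) (q : E) : ℝ → E :=
  fun r => (∑ k ∈ Icc 1 n, ((k : ℝ) * r ^ (k-1)) • v k)
    + ((((n:ℝ)+1) * (r ^ n * Real.log r) + r ^ n) • q)

lemma hasDerivAt_modelSol (n : ℕ) (v : ℕ → E) (q : E) {r : ℝ} (hr : 0 < r) :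
    HasDerivAt (modelSol n v q) (modelD1 n v q r) r := by
  have hsum : HasDerivAt (fun r : ℝ => ∑ k ∈ Icc 1 n, (r ^ k) • v k)
      (∑ k ∈ Icc 1 n, ((k : ℝ) * r ^ (k-1)) • v k) r :=
    HasDerivAt.fun_sum (fun k _ => (hasDerivAt_pow k r).smul_const (v k))
  have hlogRaw : HasDerivAt (fun r : ℝ => r ^ (n+1) * Real.log r)
      ((↑(n+1) * r ^ (n+1-1)) * Real.log r + r ^ (n+1) * r⁻¹) r :=
    (hasDerivAt_pow (n+1) r).mul (Real.hasDerivAt_log hr.ne')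
  have heq : (↑(n+1) * r ^ (n+1-1)) * Real.log r + r ^ (n+1) * r⁻¹
      = ((n:ℝ)+1) * (r ^ n * Real.log r) + r ^ n := by
    rw [Nat.add_sub_cancel, pow_succ]
    field_simp
    push_cast
    ring
  have hlog : HasDerivAt (fun r : ℝ => (r ^ (n+1) * Real.log r) • q)
      ((((n:ℝ)+1) * (r ^ n * Real.log r) + r ^ n) • q) r :=
    heq ▸ hlogRaw.smul_const q
  exact hsum.add hlog

/-- Second-derivative formula for the model solution. -/
noncomputable def modelD2 (n : ℕ) (v : ℕ → E) (q : E) : ℝ → E :=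
  fun r => (∑ k ∈ Icc 1 n, ((k : ℝ) * (((k-1 : ℕ) : ℝ) * r ^ (k-1-1))) • v k)
    + (((((n:ℝ)+1) * ((↑n * r ^ (n-1)) * Real.log r + r ^ n * r⁻¹)) + ↑n * r ^ (n-1)) • q)

lemma hasDerivAt_modelD1 (n : ℕ) (v : ℕ → E) (q : E) {r : ℝ} (hr : 0 < r) :
    HasDerivAt (modelD1 n v q) (modelD2 n v q r) r := by
  have hsum : HasDerivAt (fun r : ℝ => ∑ k ∈ Icc 1 n, ((k : ℝ) * r ^ (k-1)) • v k)
      (∑ k ∈ Icc 1 n, ((k : ℝ) * (((k-1 : ℕ) : ℝ) * r ^ (k-1-1))) • v k) r :=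
    HasDerivAt.fun_sum (fun k _ => (((hasDerivAt_pow (k-1) r).const_mul ((k:ℝ)))).smul_const (v k))
  have h1 : HasDerivAt (fun r : ℝ => ((n:ℝ)+1) * (r ^ n * Real.log r))
      (((n:ℝ)+1) * ((↑n * r ^ (n-1)) * Real.log r + r ^ n * r⁻¹)) r :=
    ((hasDerivAt_pow n r).mul (Real.hasDerivAt_log hr.ne')).const_mul _
  have hlog := (h1.add (hasDerivAt_pow n r)).smul_const q
  exact hsum.add hlog

lemma deriv_modelSol (n : ℕ) (v : ℕ → E) (q : E) {r : ℝ} (hr : 0 < r) :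
    deriv (modelSol n v q) r = modelD1 n v q r := (hasDerivAt_modelSol n v q hr).deriv

lemma deriv_deriv_modelSol (n : ℕ) (v : ℕ → E) (q : E) {r : ℝ} (hr : 0 < r) :
    deriv (deriv (modelSol n v q)) r = modelD2 n v q r := by
  have hev : deriv (modelSol n v q) =ᶠ[𝓝 r] modelD1 n v q := by
    filter_upwards [Ioi_mem_nhds hr] with x (hx : 0 < x)
    exact deriv_modelSol n v q hx
  rw [hev.deriv_eq]
  exact (hasDerivAt_modelD1 n v q hr).deriv

lemma modelOp_modelSol_eq (n : ℕ) (hn : 1 ≤ n) (v : ℕ → E) (q : E) {r : ℝ} (hr : 0 < r) :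
    modelOp n (modelSol n v q) r
      = ∑ k ∈ Icc 1 n, (((k:ℝ) * ((n:ℝ) - k + 1)) * r ^ k) • v k
        + (-(((n:ℝ)+1)) * r ^ (n+1)) • q := by
  obtain ⟨m, rfl⟩ : ∃ m, n = m + 1 := ⟨n - 1, (Nat.succ_pred_eq_of_pos hn).symm⟩
  rw [modelOp, deriv_modelSol _ v q hr, deriv_deriv_modelSol _ v q hr, modelD1, modelD2]
  rw [smul_add, smul_add, smul_sum, smul_sum]
  have hS : (∑ x ∈ Icc 1 (m+1), ((↑(m + 1) * r) • ((x:ℝ) * r ^ (x - 1)) • v x))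
      - (∑ x ∈ Icc 1 (m+1), (r ^ 2 • ((x:ℝ) * (↑(x - 1) * r ^ (x - 1 - 1))) • v x))
      = ∑ k ∈ Icc 1 (m+1), (((k:ℝ) * (((m:ℝ)+1) - k + 1)) * r ^ k) • v k := by
    rw [← Finset.sum_sub_distrib]
    refine Finset.sum_congr rfl fun x hx => ?_
    rw [smul_smul, smul_smul, ← sub_smul]
    congr 1
    obtain ⟨j, rfl⟩ : ∃ j, x = j + 1 := ⟨x - 1, (Nat.succ_pred_eq_of_pos (mem_Icc.mp hx).1).symm⟩
    simp only [Nat.add_sub_cancel]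
    cases j with
    | zero => push_cast; ring
    | succ i => simp only [Nat.add_sub_cancel]; push_cast; ring
  have hT : (↑(m + 1) * r) • (((↑(m+1):ℝ) + 1) * (r ^ (m + 1) * Real.log r) + r ^ (m + 1)) • q
      - r ^ 2 • ((((↑(m+1):ℝ) + 1) * ((↑(m+1) * r ^ (m + 1 - 1)) * Real.log r + r ^ (m + 1) * r⁻¹)
          + ↑(m+1) * r ^ (m + 1 - 1)) • q)
      = (-(((m:ℝ)+1)+1) * r ^ (m + 1 + 1)) • q := by
    rw [smul_smul, smul_smul, ← sub_smul]
    congr 1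
    simp only [Nat.add_sub_cancel]
    field_simp
    push_cast
    ring
  push_cast at hS hT ⊢
  rw [← hS, ← hT]
  abel

end Aux

/-- If `F` is `C^{n+2}`, `F(0) = 0` and `F = O(r^{n+2})` as `r → 0⁺`, then the
unique tuple `(u_1, …, u_n, p)` for which
`u(r) = Σ_{k=1}^n u_k r^k + p r^{n+1} log r` satisfies
`L u - F = O(r^{n+2})` is the zero tuple: `u_1 = … = u_n = 0` and `p = 0`. -/
theorem modelOp_vanishing_source_zero_solution
    {E : Type*} [NormedAddCommGroup E] [NormedSpace ℝ E]
    (n : ℕ) (hn : 1 ≤ n) (F : ℝ → E)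
    (hF : ContDiff ℝ (n + 2) F) (hF0 : F 0 = 0)
    (hFO : F =O[𝓝[>] (0 : ℝ)] fun r => r ^ (n + 2)) :
    ((fun r : ℝ => modelOp n (modelSol n (fun _ => (0 : E)) 0) r - F r)
      =O[𝓝[>] (0 : ℝ)] fun r => r ^ (n + 2))
    ∧ (∀ (v : ℕ → E) (q : E),
        ((fun r : ℝ => modelOp n (modelSol n v q) r - F r)
          =O[𝓝[>] (0 : ℝ)] fun r => r ^ (n + 2)) →
        (∀ k, 1 ≤ k → k ≤ n → v k = 0) ∧ q = 0) := by
  have hzero : modelSol n (fun _ => (0 : E)) 0 = fun _ => (0 : E) := by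
    funext r; simp [modelSol]
  constructor
  · have : (fun r : ℝ => modelOp n (modelSol n (fun _ => (0 : E)) 0) r - F r)
        = fun r : ℝ => -F r := by
      funext r
      simp [hzero, modelOp, deriv_const']
    rw [this]
    exact hFO.neg_left
  · intro v q h
    have hL : (fun r : ℝ => modelOp n (modelSol n v q) r) =O[𝓝[>] (0:ℝ)]
        fun r => r ^ (n + 2) := by
      have := h.add hFO
      simpa using this
    set c : ℕ → E := fun k =>
      if k = 0 then 0
      else if k ≤ n then (((k:ℝ) * ((n:ℝ) - k + 1))) • v k
      else (-(((n:ℝ)+1))) • q with hc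
    have hcr : ∀ r : ℝ, (∑ k ∈ range ((n+1)+1), (r ^ k) • c k)
        = ∑ k ∈ Icc 1 n, (((k:ℝ) * ((n:ℝ) - k + 1)) * r ^ k) • v k
          + (-(((n:ℝ)+1)) * r ^ (n+1)) • q := by
      intro r
      rw [Finset.sum_range_succ]
      have h1 : ∑ k ∈ range (n+1), (r ^ k) • c k = ∑ k ∈ Icc 1 n, (r ^ k) • c k := by
        refine (Finset.sum_subset ?_ ?_).symm
        · intro x hx
          rw [Finset.mem_range]
          exact Nat.lt_succ_of_le (mem_Icc.mp hx).2
        · intro x hx hnx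
          rw [Finset.mem_range] at hx
          rw [Finset.mem_Icc] at hnx
          push_neg at hnx
          have hx0 : x = 0 := by omega
          simp [hc, hx0]
      rw [h1]
      congr 1
      · refine Finset.sum_congr rfl fun k hk => ?_
        rw [Finset.mem_Icc] at hk
        have hk0 : k ≠ 0 := by omega
        simp only [hc, hk0, if_false, hk.2, if_true]
        rw [smul_smul, mul_comm]
      · have : c (n+1) = (-(((n:ℝ)+1))) • q := by
          simp [hc]
        rw [this, smul_smul, mul_comm]
    have hpoly : (fun r : ℝ => ∑ k ∈ range ((n+1)+1), (r ^ k) • c k) =O[𝓝[>] (0:ℝ)]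
        fun r => r ^ ((n+1)+1) := by
      refine hL.congr' ?_ ?_
      · filter_upwards [self_mem_nhdsWithin] with r (hr : 0 < r)
        rw [modelOp_modelSol_eq n hn v q hr, hcr r]
      · filter_upwards with r
        norm_num
    have hcz := poly_coeff_zero (n+1) c hpoly
    constructor
    · intro k hk1 hkn
      have hck := hcz k (by omega)
      have hk0 : k ≠ 0 := by omega
      simp only [hc, hk0, if_false, hkn, if_true] at hck
      rcases smul_eq_zero.mp hck with hs | hv
      · exfalso
        have h1 : (1:ℝ) ≤ (k:ℝ) := by exact_mod_cast hk1
        have h2 : (k:ℝ) ≤ (n:ℝ) := by exact_mod_cast hkn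
        nlinarith
      · exact hv
    · have hcq := hcz (n+1) le_rfl
      have : c (n+1) = (-(((n:ℝ)+1))) • q := by simp [hc]
      rw [this] at hcq
      rcases smul_eq_zero.mp hcq with hs | hv
      · exfalso
        have : (0:ℝ) < (n:ℝ) + 1 := by positivity
        linarith [neg_eq_zero.mp hs]
      · exact hv
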